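/- For every ε ∈ (0,1), there exists a function f_ε : {0,1,2} → ℝ² that is a global minimizer of Q_ε over all functions f : {0,1,2} → ℝ². -/

import Mathlib

open Real

/-- softmax of a vector `v ∈ ℝ^d`: `softmax v j = exp (v j) / ∑ m, exp (v m)`. -/
noncomputable def softmax {d : ℕ} (v : Fin d → ℝ) : Fin d → ℝ :=
  fun j => Real.exp (v j) / ∑ m, Real.exp (v m)

/-- A single hard-OKO cross-entropy term on the summed logits of a set. -/
noncomputable def toyLoss (f : Fin 3 → Fin 2 → ℝ) (x₁ x₂ x₃ : Fin 3) (y : Fin 2) : ℝ :=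
  -Real.log (softmax (fun j => f x₁ j + f x₂ j + f x₃ j) y)

/-- The toy hard OKO risk `Q_ε` over functions `f : {0,1,2} → ℝ²`
(class 1 is index 0, class 2 is index 1). -/
noncomputable def toyRisk (ε : ℝ) (f : Fin 3 → Fin 2 → ℝ) : ℝ :=
  (1 - ε) ^ 3 / 2 * (toyLoss f 0 0 0 0 + toyLoss f 0 0 0 1)
  + ε * (1 - ε) ^ 2 / 2 *
      (toyLoss f 0 0 2 0 + toyLoss f 1 0 0 0 + toyLoss f 0 1 0 0
        + toyLoss f 0 0 1 1 + toyLoss f 2 0 0 1 + toyLoss f 0 2 0 1)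
  + ε ^ 2 * (1 - ε) / 2 *
      (toyLoss f 1 1 0 0 + toyLoss f 1 0 2 0 + toyLoss f 0 1 2 0
        + toyLoss f 2 2 0 1 + toyLoss f 2 0 1 1 + toyLoss f 2 1 0 1)
  + ε ^ 3 / 2 * (toyLoss f 1 1 2 0 + toyLoss f 2 2 1 1)

noncomputable def okoF (g : Fin 3 → ℝ) : Fin 3 → Fin 2 → ℝ := fun x => ![g x, 0]

lemma toyLoss_F0 (g : Fin 3 → ℝ) (x₁ x₂ x₃ : Fin 3) :
    toyLoss (okoF g) x₁ x₂ x₃ 0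
      = Real.log (Real.exp (g x₁ + g x₂ + g x₃) + 1) - (g x₁ + g x₂ + g x₃) := by
  simp only [toyLoss, softmax, okoF, Fin.sum_univ_two, Matrix.cons_val_zero,
    Matrix.cons_val_one, Matrix.head_cons]
  rw [Real.log_div (Real.exp_ne_zero _) (by positivity)]
  simp [Real.log_exp, Real.exp_zero]

lemma toyLoss_F1 (g : Fin 3 → ℝ) (x₁ x₂ x₃ : Fin 3) :
    toyLoss (okoF g) x₁ x₂ x₃ 1
      = Real.log (Real.exp (g x₁ + g x₂ + g x₃) + 1) := by
  simp only [toyLoss, softmax, okoF, Fin.sum_univ_two, Matrix.cons_val_zero,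
    Matrix.cons_val_one, Matrix.head_cons]
  rw [Real.log_div (Real.exp_ne_zero _) (by positivity)]
  simp [Real.log_exp, Real.exp_zero]

lemma softmax_shift (v : Fin 2 → ℝ) (j : Fin 2) :
    softmax v j = softmax ![v 0 - v 1, 0] j := by
  have h1 := Real.exp_pos (v 0)
  have h2 := Real.exp_pos (v 1)
  fin_cases j <;>
    simp only [softmax, Fin.sum_univ_two, Matrix.cons_val_zero, Matrix.cons_val_one,
      Matrix.head_cons, Fin.isValue, Real.exp_sub, Real.exp_zero, Fin.mk_zero, Fin.mk_one,
      Fin.zero_eta, Fin.mk_one]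
  · rw [div_add' _ _ _ h2.ne', div_div_div_comm, div_self h2.ne', div_one, one_mul]
  · rw [div_add' _ _ _ h2.ne', one_mul, one_div_div]

lemma toyLoss_shift (f : Fin 3 → Fin 2 → ℝ) (x₁ x₂ x₃ : Fin 3) (y : Fin 2) :
    toyLoss f x₁ x₂ x₃ y = toyLoss (okoF fun x => f x 0 - f x 1) x₁ x₂ x₃ y := by
  have hv : (fun j => okoF (fun x => f x 0 - f x 1) x₁ j
      + okoF (fun x => f x 0 - f x 1) x₂ j + okoF (fun x => f x 0 - f x 1) x₃ j)
      = ![(f x₁ 0 + f x₂ 0 + f x₃ 0) - (f x₁ 1 + f x₂ 1 + f x₃ 1), 0] := by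
    funext j
    fin_cases j <;> simp [okoF] <;> ring
  rw [toyLoss, toyLoss, hv,
    ← softmax_shift (fun j => f x₁ j + f x₂ j + f x₃ j) y]

lemma okoL_nonneg (s : ℝ) : 0 ≤ Real.log (Real.exp s + 1) :=
  Real.log_nonneg (by linarith [Real.exp_pos s])

lemma okoL_ge (s : ℝ) : s ≤ Real.log (Real.exp s + 1) := by
  calc s = Real.log (Real.exp s) := (Real.log_exp s).symm
    _ ≤ _ := Real.log_le_log (Real.exp_pos s) (by linarith)

lemma toyRisk_shift (ε : ℝ) (f : Fin 3 → Fin 2 → ℝ) :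
    toyRisk ε f = toyRisk ε (okoF fun x => f x 0 - f x 1) := by
  simp only [toyRisk, ← toyLoss_shift]

set_option maxHeartbeats 1000000 in
lemma toyRisk_coercive {ε : ℝ} (hε0 : 0 < ε) (hε1 : ε < 1) (g : Fin 3 → ℝ) :
    min ((1 - ε) ^ 3 / 2) (ε * (1 - ε) ^ 2 / 2) * ‖g‖ ≤ toyRisk ε (okoF g) := by
  have h1ε : (0:ℝ) < 1 - ε := by linarith
  have hw1 : (0:ℝ) < (1 - ε) ^ 3 / 2 := div_pos (pow_pos h1ε 3) two_pos
  have hw2 : (0:ℝ) < ε * (1 - ε) ^ 2 / 2 := div_pos (mul_pos hε0 (pow_pos h1ε 2)) two_pos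
  have hw3 : (0:ℝ) ≤ ε ^ 2 * (1 - ε) / 2 := (div_pos (mul_pos (pow_pos hε0 2) h1ε) two_pos).le
  have hw4 : (0:ℝ) ≤ ε ^ 3 / 2 := (div_pos (pow_pos hε0 3) two_pos).le
  have hc0w1 : min ((1 - ε) ^ 3 / 2) (ε * (1 - ε) ^ 2 / 2) ≤ (1 - ε) ^ 3 / 2 := min_le_left _ _
  have hc0w2 : min ((1 - ε) ^ 3 / 2) (ε * (1 - ε) ^ 2 / 2) ≤ ε * (1 - ε) ^ 2 / 2 := min_le_right _ _
  have hc0 : 0 < min ((1 - ε) ^ 3 / 2) (ε * (1 - ε) ^ 2 / 2) := lt_min hw1 hw2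
  have hD1n : (0:ℝ) ≤ (Real.log (Real.exp (g 0 + g 0 + g 0) + 1) - (g 0 + g 0 + g 0))
      + Real.log (Real.exp (g 0 + g 0 + g 0) + 1) := by
    linarith [okoL_nonneg (g 0 + g 0 + g 0), okoL_ge (g 0 + g 0 + g 0)]
  have hD2n : (0:ℝ) ≤ (Real.log (Real.exp (g 1 + g 0 + g 0) + 1) - (g 1 + g 0 + g 0))
      + Real.log (Real.exp (g 0 + g 0 + g 1) + 1) := by
    linarith [okoL_ge (g 1 + g 0 + g 0), okoL_ge (g 0 + g 0 + g 1),
      okoL_nonneg (g 1 + g 0 + g 0), okoL_nonneg (g 0 + g 0 + g 1)]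
  have hD3n : (0:ℝ) ≤ (Real.log (Real.exp (g 0 + g 0 + g 2) + 1) - (g 0 + g 0 + g 2))
      + Real.log (Real.exp (g 2 + g 0 + g 0) + 1) := by
    linarith [okoL_ge (g 0 + g 0 + g 2), okoL_ge (g 2 + g 0 + g 0),
      okoL_nonneg (g 0 + g 0 + g 2), okoL_nonneg (g 2 + g 0 + g 0)]
  set M : ℝ := ((Real.log (Real.exp (g 0 + g 0 + g 0) + 1) - (g 0 + g 0 + g 0))
      + Real.log (Real.exp (g 0 + g 0 + g 0) + 1))
    + ((Real.log (Real.exp (g 1 + g 0 + g 0) + 1) - (g 1 + g 0 + g 0))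
      + Real.log (Real.exp (g 0 + g 0 + g 1) + 1))
    + ((Real.log (Real.exp (g 0 + g 0 + g 2) + 1) - (g 0 + g 0 + g 2))
      + Real.log (Real.exp (g 2 + g 0 + g 0) + 1)) with hMdef
  have hMn : 0 ≤ M := by rw [hMdef]; linarith
  have hnorm : ‖g‖ ≤ M := by
    rw [pi_norm_le_iff_of_nonneg hMn]
    intro i
    fin_cases i <;>
      simp only [Fin.zero_eta, Fin.mk_one, Fin.reduceFinMk, Real.norm_eq_abs, abs_le] <;>
      constructor <;>
      linarith [okoL_nonneg (g 0 + g 0 + g 0), okoL_ge (g 0 + g 0 + g 0),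
        okoL_ge (g 1 + g 0 + g 0), okoL_ge (g 0 + g 0 + g 1),
        okoL_nonneg (g 1 + g 0 + g 0), okoL_nonneg (g 0 + g 0 + g 1),
        okoL_ge (g 0 + g 0 + g 2), okoL_ge (g 2 + g 0 + g 0),
        okoL_nonneg (g 0 + g 0 + g 2), okoL_nonneg (g 2 + g 0 + g 0)]
  have hD23 : ((Real.log (Real.exp (g 1 + g 0 + g 0) + 1) - (g 1 + g 0 + g 0))
        + Real.log (Real.exp (g 0 + g 0 + g 1) + 1))
      + ((Real.log (Real.exp (g 0 + g 0 + g 2) + 1) - (g 0 + g 0 + g 2))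
        + Real.log (Real.exp (g 2 + g 0 + g 0) + 1))
      ≤ (Real.log (Real.exp (g 0 + g 0 + g 2) + 1) - (g 0 + g 0 + g 2))
        + (Real.log (Real.exp (g 1 + g 0 + g 0) + 1) - (g 1 + g 0 + g 0))
        + (Real.log (Real.exp (g 0 + g 1 + g 0) + 1) - (g 0 + g 1 + g 0))
        + Real.log (Real.exp (g 0 + g 0 + g 1) + 1)
        + Real.log (Real.exp (g 2 + g 0 + g 0) + 1)
        + Real.log (Real.exp (g 0 + g 2 + g 0) + 1) := by
    linarith [okoL_ge (g 0 + g 1 + g 0), okoL_nonneg (g 0 + g 2 + g 0)]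
  have hG3n : (0:ℝ) ≤ (Real.log (Real.exp (g 1 + g 1 + g 0) + 1) - (g 1 + g 1 + g 0))
      + (Real.log (Real.exp (g 1 + g 0 + g 2) + 1) - (g 1 + g 0 + g 2))
      + (Real.log (Real.exp (g 0 + g 1 + g 2) + 1) - (g 0 + g 1 + g 2))
      + Real.log (Real.exp (g 2 + g 2 + g 0) + 1)
      + Real.log (Real.exp (g 2 + g 0 + g 1) + 1)
      + Real.log (Real.exp (g 2 + g 1 + g 0) + 1) := by
    linarith [okoL_ge (g 1 + g 1 + g 0), okoL_ge (g 1 + g 0 + g 2), okoL_ge (g 0 + g 1 + g 2),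
      okoL_nonneg (g 2 + g 2 + g 0), okoL_nonneg (g 2 + g 0 + g 1), okoL_nonneg (g 2 + g 1 + g 0)]
  have hG4n : (0:ℝ) ≤ (Real.log (Real.exp (g 1 + g 1 + g 2) + 1) - (g 1 + g 1 + g 2))
      + Real.log (Real.exp (g 2 + g 2 + g 1) + 1) := by
    linarith [okoL_ge (g 1 + g 1 + g 2), okoL_nonneg (g 2 + g 2 + g 1)]
  calc min ((1 - ε) ^ 3 / 2) (ε * (1 - ε) ^ 2 / 2) * ‖g‖
      ≤ min ((1 - ε) ^ 3 / 2) (ε * (1 - ε) ^ 2 / 2) * M :=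
        mul_le_mul_of_nonneg_left hnorm hc0.le
    _ ≤ toyRisk ε (okoF g) := by
        rw [hMdef]
        simp only [toyRisk, toyLoss_F0, toyLoss_F1]
        have hA := mul_le_mul_of_nonneg_right hc0w1 hD1n
        have hB := mul_le_mul_of_nonneg_right hc0w2 hD2n
        have hC := mul_le_mul_of_nonneg_right hc0w2 hD3n
        have hG2 := mul_le_mul_of_nonneg_left hD23 hw2.le
        have h3 := mul_nonneg hw3 hG3n
        have h4 := mul_nonneg hw4 hG4n
        linarith [hA, hB, hC, hG2, h3, h4]

lemma okoLoss_cont (x₁ x₂ x₃ : Fin 3) (y : Fin 2) :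
    Continuous fun g : Fin 3 → ℝ => toyLoss (okoF g) x₁ x₂ x₃ y := by
  have hs : Continuous fun g : Fin 3 → ℝ => g x₁ + g x₂ + g x₃ :=
    ((continuous_apply x₁).add (continuous_apply x₂)).add (continuous_apply x₃)
  have hL : Continuous fun g : Fin 3 → ℝ =>
      Real.log (Real.exp (g x₁ + g x₂ + g x₃) + 1) :=
    (hs.rexp.add continuous_const).log fun g =>
      (by positivity : (0:ℝ) < Real.exp (g x₁ + g x₂ + g x₃) + 1).ne'
  fin_cases y
  · simpa only [toyLoss_F0, Fin.zero_eta, Fin.isValue, Pi.sub_def] using hL.sub hs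
  · simpa only [toyLoss_F1, Fin.mk_one, Fin.isValue] using hL

lemma toyRisk_cont (ε : ℝ) : Continuous fun g : Fin 3 → ℝ => toyRisk ε (okoF g) := by
  simp only [toyRisk]
  exact ((((continuous_const.mul ((okoLoss_cont 0 0 0 0).add (okoLoss_cont 0 0 0 1))).add
    (continuous_const.mul ((((((okoLoss_cont 0 0 2 0).add (okoLoss_cont 1 0 0 0)).add
      (okoLoss_cont 0 1 0 0)).add (okoLoss_cont 0 0 1 1)).add (okoLoss_cont 2 0 0 1)).add
      (okoLoss_cont 0 2 0 1)))).add
    (continuous_const.mul ((((((okoLoss_cont 1 1 0 0).add (okoLoss_cont 1 0 2 0)).add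
      (okoLoss_cont 0 1 2 0)).add (okoLoss_cont 2 2 0 1)).add (okoLoss_cont 2 0 1 1)).add
      (okoLoss_cont 2 1 0 1)))).add
    (continuous_const.mul ((okoLoss_cont 1 1 2 0).add (okoLoss_cont 2 2 1 1))))

/-- For every `ε ∈ (0,1)` the toy hard OKO risk admits a global minimizer. -/
theorem toyRisk_exists_minimizer (ε : ℝ) (hε : ε ∈ Set.Ioo (0 : ℝ) 1) :
    ∃ fε : Fin 3 → Fin 2 → ℝ, ∀ f : Fin 3 → Fin 2 → ℝ, toyRisk ε fε ≤ toyRisk ε f := by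
  obtain ⟨hε0, hε1⟩ := hε
  have h1ε : (0:ℝ) < 1 - ε := by linarith
  set c0 := min ((1 - ε) ^ 3 / 2) (ε * (1 - ε) ^ 2 / 2) with hc0
  have hc0pos : 0 < c0 :=
    lt_min (div_pos (pow_pos h1ε 3) two_pos) (div_pos (mul_pos hε0 (pow_pos h1ε 2)) two_pos)
  set R := toyRisk ε (okoF 0) / c0 with hR
  have h00 : 0 ≤ toyRisk ε (okoF 0) := by
    have := toyRisk_coercive hε0 hε1 0
    simpa using this
  have hR0 : 0 ≤ R := div_nonneg h00 hc0pos.le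
  obtain ⟨g₀, hg₀K, hmin⟩ := (isCompact_closedBall (0 : Fin 3 → ℝ) R).exists_isMinOn
    ⟨0, Metric.mem_closedBall_self hR0⟩ ((toyRisk_cont ε).continuousOn)
  refine ⟨okoF g₀, fun f => ?_⟩
  rw [toyRisk_shift ε f]
  set g := fun x : Fin 3 => f x 0 - f x 1 with hg
  by_cases hmem : g ∈ Metric.closedBall (0 : Fin 3 → ℝ) R
  · exact hmin hmem
  · have hgn : R ≤ ‖g‖ := by
      rw [Metric.mem_closedBall, dist_zero_right] at hmem
      linarith [not_le.1 hmem]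
    have h1 : toyRisk ε (okoF g₀) ≤ toyRisk ε (okoF 0) :=
      hmin (Metric.mem_closedBall_self hR0)
    have h2 : c0 * ‖g‖ ≤ toyRisk ε (okoF g) := toyRisk_coercive hε0 hε1 g
    have h3 : toyRisk ε (okoF 0) = c0 * R := by
      rw [hR, mul_div_cancel₀ _ hc0pos.ne']
    have h4 : c0 * R ≤ c0 * ‖g‖ := mul_le_mul_of_nonneg_left hgn hc0pos.le
    linarith
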